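/- Let f : ℝ^d → ℝ be differentiable, μ-strongly convex with L-Lipschitz gradient, where 0 < μ ≤ L and α > 0. Then for all x, y ∈ ℝ^d: ‖(x - α∇f(x)) - (y - α∇f(y))‖ ≤ max{|1 - αμ|, |1 - αL|} · ‖x - y‖. -/

import Mathlib

open InnerProductSpace Set

section Aux

set_option linter.unusedSectionVars false

variable {E : Type*} [NormedAddCommGroup E] [InnerProductSpace ℝ E] [CompleteSpace E]

local notation "⟪" x ", " y "⟫" => @inner ℝ _ _ x y

private lemma line_hasDerivAt_aux {f : E → ℝ} {G : E → E} (hG : ∀ z, HasGradientAt f (G z) z)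
    (x v : E) (t : ℝ) :
    HasDerivAt (fun t : ℝ => f (x + t • v)) ⟪G (x + t • v), v⟫ t := by
  have h1 : HasDerivAt (fun t : ℝ => x + t • v) v t := by
    simpa using ((hasDerivAt_id t).smul_const v).const_add x
  have h2 := (hG (x + t • v)).hasFDerivAt.comp_hasDerivAt t h1
  have h3 : HasDerivAt (f ∘ fun t : ℝ => x + t • v) ⟪G (x + t • v), v⟫ t := by simpa using h2
  exact h3

private lemma first_order_aux {f : E → ℝ} {G : E → E} (hf : ConvexOn ℝ univ f)
    (hG : ∀ z, HasGradientAt f (G z) z) (x y : E) :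
    f x + ⟪G x, y - x⟫ ≤ f y := by
  set v := y - x with hv
  have hψc : ConvexOn ℝ univ (fun t : ℝ => f (x + t • v)) := by
    have := hf.comp_affineMap (AffineMap.lineMap x y : ℝ →ᵃ[ℝ] E)
    simpa [Function.comp_def, AffineMap.lineMap_apply, hv, add_comm] using this
  have hd : HasDerivAt (fun t : ℝ => f (x + t • v)) ⟪G x, v⟫ 0 := by
    simpa using line_hasDerivAt_aux hG x v 0
  have := hψc.le_slope_of_hasDerivAt (mem_univ (0:ℝ)) (mem_univ (1:ℝ)) one_pos hd
  have h0 : x + (0:ℝ) • v = x := by simp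
  have h1 : x + (1:ℝ) • v = y := by simp [hv]
  rw [slope_def_field, h0, h1] at this
  have h2 : (f y - f x) / ((1:ℝ) - 0) = f y - f x := by ring
  rw [h2] at this
  linarith

private lemma descent_aux {f : E → ℝ} {g : E → E} {L : ℝ}
    (hg : ∀ z, HasGradientAt f (g z) z)
    (hlip : ∀ a b, ‖g a - g b‖ ≤ L * ‖a - b‖) (x y : E) :
    f y ≤ f x + ⟪g x, y - x⟫ + L / 2 * ‖y - x‖ ^ 2 := by
  set v := y - x with hv
  set D : ℝ → ℝ := fun t => ⟪g (x + t • v), v⟫ with hD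
  have hψ : ∀ t : ℝ, HasDerivAt (fun t : ℝ => f (x + t • v)) (D t) t :=
    fun t => line_hasDerivAt_aux hg x v t
  set χ : ℝ → ℝ := fun t => f (x + t • v) - t * D 0 - L * ‖v‖ ^ 2 * t ^ 2 / 2 with hχdef
  have hχ : ∀ t : ℝ, HasDerivAt χ (D t - D 0 - L * ‖v‖ ^ 2 * t) t := by
    intro t
    have h1 : HasDerivAt (fun t : ℝ => t * D 0) (D 0) t := by
      simpa using (hasDerivAt_id t).mul_const (D 0)
    have h2 : HasDerivAt (fun t : ℝ => L * ‖v‖ ^ 2 * t ^ 2 / 2) (L * ‖v‖ ^ 2 * t) t := by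
      have := ((hasDerivAt_pow 2 t).const_mul (L * ‖v‖ ^ 2)).div_const 2
      refine this.congr_deriv ?_
      ring
    have h3 := ((hψ t).sub h1).sub h2
    exact h3
  have hderiv : ∀ t : ℝ, deriv χ t = D t - D 0 - L * ‖v‖ ^ 2 * t := fun t => (hχ t).deriv
  have hnonpos : ∀ t ∈ interior (Icc (0:ℝ) 1), deriv χ t ≤ 0 := by
    intro t ht
    rw [interior_Icc] at ht
    rw [hderiv t]
    have h1 : D t - D 0 = ⟪g (x + t • v) - g x, v⟫ := by
      simp [hD, inner_sub_left]
    have h2 : ⟪g (x + t • v) - g x, v⟫ ≤ ‖g (x + t • v) - g x‖ * ‖v‖ :=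
      real_inner_le_norm _ _
    have h3 : ‖g (x + t • v) - g x‖ ≤ L * (t * ‖v‖) := by
      have := hlip (x + t • v) x
      simpa [norm_smul, abs_of_pos ht.1] using this
    nlinarith [norm_nonneg v, ht.1.le]
  have hanti : AntitoneOn χ (Icc (0:ℝ) 1) := by
    refine antitoneOn_of_deriv_nonpos (convex_Icc 0 1) ?_ ?_ hnonpos
    · exact fun t _ => ((hχ t).continuousAt).continuousWithinAt
    · exact fun t _ => ((hχ t).differentiableAt).differentiableWithinAt
  have hle := hanti (left_mem_Icc.2 zero_le_one) (right_mem_Icc.2 zero_le_one) zero_le_one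
  have h0 : x + (0:ℝ) • v = x := by simp
  have h1 : x + (1:ℝ) • v = y := by simp [hv]
  simp only [hχdef, h0, h1] at hle
  have hD0 : D 0 = ⟪g x, v⟫ := by simp [hD]
  rw [hD0] at hle
  nlinarith [hle]

private lemma hasGradientAt_const_norm_sq_aux (μ : ℝ) (x : E) :
    HasGradientAt (fun z : E => μ / 2 * ‖z‖ ^ 2) (μ • x) x := by
  have h1 : HasFDerivAt (fun z : E => ⟪z, z⟫)
      ((fderivInnerCLM ℝ (x, x)).comp ((ContinuousLinearMap.id ℝ E).prod
        (ContinuousLinearMap.id ℝ E))) x :=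
    (hasFDerivAt_id x).inner ℝ (hasFDerivAt_id x)
  have h2 := h1.const_mul (μ / 2)
  rw [hasGradientAt_iff_hasFDerivAt]
  have heq : (fun z : E => μ / 2 * ‖z‖ ^ 2) = fun z : E => μ / 2 * ⟪z, z⟫ := by
    funext z; rw [real_inner_self_eq_norm_sq]
  rw [heq]
  refine h2.congr_fderiv ?_
  ext w
  simp [fderivInnerCLM_apply, real_inner_smul_left, real_inner_comm]
  ring

private lemma inner_left_concave_aux (c : E) : ConcaveOn ℝ univ (fun z : E => ⟪c, z⟫) := by
  refine ⟨convex_univ, fun a _ b _ p q hp hq hpq => ?_⟩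
  simp [inner_add_right, real_inner_smul_right]

private lemma hasGradientAt_inner_const_aux (c : E) (x : E) :
    HasGradientAt (fun z : E => ⟪c, z⟫) c x := by
  rw [hasGradientAt_iff_hasFDerivAt]
  exact (toDual ℝ E c).hasFDerivAt

private lemma cocoercive_aux {h : E → ℝ} {G : E → E} {C : ℝ} (hC : 0 < C)
    (hconv : ConvexOn ℝ univ h)
    (hG : ∀ z, HasGradientAt h (G z) z)
    (hdesc : ∀ a b : E, h b ≤ h a + ⟪G a, b - a⟫ + C / 2 * ‖b - a‖ ^ 2)
    (x y : E) : ‖G x - G y‖ ^ 2 ≤ C * ⟪G x - G y, x - y⟫ := by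
  have key : ∀ a b : E, ‖G a - G b‖ ^ 2 / (2 * C) ≤ h a - h b - ⟪G b, a - b⟫ := by
    intro a b
    set φ : E → ℝ := fun z => h z - ⟪G b, z⟫ with hφdef
    have hφG : ∀ z, HasGradientAt φ (G z - G b) z := by
      intro z
      have h1 := (hG z).hasFDerivAt.sub (hasGradientAt_inner_const_aux (G b) z).hasFDerivAt
      rw [hasGradientAt_iff_hasFDerivAt, map_sub]
      exact h1
    have hφconv : ConvexOn ℝ univ φ := hconv.sub (inner_left_concave_aux (G b))
    have hφdesc : ∀ p q : E, φ q ≤ φ p + ⟪G p - G b, q - p⟫ + C / 2 * ‖q - p‖ ^ 2 := by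
      intro p q
      have := hdesc p q
      simp only [hφdef, inner_sub_left, inner_sub_right]
      linarith [this, inner_sub_right (𝕜 := ℝ) (G p) q p]
    have hbmin : ∀ z, φ b ≤ φ z := by
      intro z
      have := first_order_aux hφconv hφG b z
      simpa using this
    set u := G a - G b with hu
    have h1 := hbmin (a - C⁻¹ • u)
    have h2 := hφdesc a (a - C⁻¹ • u)
    have h3 : ⟪u, a - C⁻¹ • u - a⟫ = -(C⁻¹ * ‖u‖ ^ 2) := by
      simp [real_inner_smul_right, real_inner_self_eq_norm_sq]
    have h4 : ‖a - C⁻¹ • u - a‖ ^ 2 = C⁻¹ ^ 2 * ‖u‖ ^ 2 := by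
      have : a - C⁻¹ • u - a = -(C⁻¹ • u) := by abel
      rw [this, norm_neg, norm_smul, mul_pow]
      simp [abs_of_pos (inv_pos.2 hC)]
    rw [h3, h4] at h2
    have h5 : φ b ≤ φ a - ‖u‖ ^ 2 / (2 * C) := by
      have hC' : C ≠ 0 := ne_of_gt hC
      have : -(C⁻¹ * ‖u‖ ^ 2) + C / 2 * (C⁻¹ ^ 2 * ‖u‖ ^ 2) = -(‖u‖ ^ 2 / (2 * C)) := by
        field_simp; ring
      linarith [h1.trans h2, this.le, this.ge]
    simp only [hφdef] at h5
    have : ⟪G b, a - b⟫ = ⟪G b, a⟫ - ⟪G b, b⟫ := inner_sub_right _ _ _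
    linarith
  have k1 := key x y
  have k2 := key y x
  have e1 : ‖G y - G x‖ = ‖G x - G y‖ := norm_sub_rev _ _
  have e2 : ⟪G x - G y, x - y⟫ = ⟪G x, x - y⟫ - ⟪G y, x - y⟫ := inner_sub_left _ _ _
  have e3 : ⟪G x, y - x⟫ = -⟪G x, x - y⟫ := by
    rw [← inner_neg_right]; congr 1; abel
  rw [e1] at k2
  have hsum : ‖G x - G y‖ ^ 2 / (2 * C) + ‖G x - G y‖ ^ 2 / (2 * C) ≤ ⟪G x - G y, x - y⟫ := by
    rw [e2]; linarith [k1, k2, e3.le, e3.ge]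
  have : ‖G x - G y‖ ^ 2 / (2 * C) + ‖G x - G y‖ ^ 2 / (2 * C) = ‖G x - G y‖ ^ 2 / C := by
    field_simp
    ring
  rw [this] at hsum
  calc ‖G x - G y‖ ^ 2 = C * (‖G x - G y‖ ^ 2 / C) := by field_simp
    _ ≤ C * ⟪G x - G y, x - y⟫ := mul_le_mul_of_nonneg_left hsum hC.le

end Aux

private lemma contraction_alg {μ L α r n s M : ℝ} (hα : 0 < α) (hLt : μ < L)
    (hr0 : 0 ≤ r) (hn0 : 0 ≤ n) (hcs : s ≤ n * r) (hcoco : n ^ 2 ≤ (L - μ) * s)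
    (hM1 : |1 - α * μ| ≤ M) (hM2 : |1 - α * L| ≤ M) :
    (1 - α * μ) ^ 2 * r ^ 2 - 2 * ((1 - α * μ) * (α * s)) + α ^ 2 * n ^ 2 ≤ M ^ 2 * r ^ 2 := by
  have hCpos : 0 < L - μ := sub_pos.2 hLt
  have hs0 : 0 ≤ s := by nlinarith [sq_nonneg n]
  have hM0 : 0 ≤ M := le_trans (abs_nonneg _) hM1
  have hb1 : (1 - α * μ) ^ 2 ≤ M ^ 2 := by nlinarith [sq_abs (1 - α * μ), abs_nonneg (1 - α * μ)]
  have hb2 : (1 - α * L) ^ 2 ≤ M ^ 2 := by nlinarith [sq_abs (1 - α * L), abs_nonneg (1 - α * L)]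
  have hnCr : n ≤ (L - μ) * r := by
    rcases eq_or_lt_of_le hn0 with h0 | h0
    · rw [← h0]; positivity
    · by_contra hcon
      push_neg at hcon
      have h1 : (L - μ) * s ≤ (L - μ) * (n * r) := mul_le_mul_of_nonneg_left hcs hCpos.le
      nlinarith [mul_lt_mul_of_pos_right hcon h0]
  rcases le_or_gt 0 (1 - α * μ) with hpos | hneg
  · rcases le_or_gt (α * (L - μ)) (2 * (1 - α * μ)) with hk | hk
    · have p1 : 0 ≤ α ^ 2 * ((L - μ) * s - n ^ 2) :=
        mul_nonneg (sq_nonneg α) (sub_nonneg.2 hcoco)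
      have p2 : 0 ≤ (α * s) * (2 * (1 - α * μ) - α * (L - μ)) :=
        mul_nonneg (mul_nonneg hα.le hs0) (by linarith)
      nlinarith [mul_nonneg (sub_nonneg.2 hb1) (sq_nonneg r)]
    · have p1 : 0 ≤ 2 * α * (1 - α * μ) * ((L - μ) * s - n ^ 2) :=
        mul_nonneg (mul_nonneg (by linarith) hpos) (sub_nonneg.2 hcoco)
      have p2 : 0 ≤ ((α * (L - μ) - 2 * (1 - α * μ)) * α) * ((L - μ) ^ 2 * r ^ 2 - n ^ 2) := by
        refine mul_nonneg (mul_nonneg (by linarith) hα.le) ?_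
        nlinarith
      have hCE : (L - μ) * ((1 - α * μ) ^ 2 * r ^ 2 - 2 * ((1 - α * μ) * (α * s))
            + α ^ 2 * n ^ 2)
          ≤ (L - μ) * ((1 - α * L) ^ 2 * r ^ 2) := by
        nlinarith [p1, p2]
      have h2 := le_of_mul_le_mul_left hCE hCpos
      nlinarith [mul_nonneg (sub_nonneg.2 hb2) (sq_nonneg r)]
  · have q1 : 0 ≤ ((-(2:ℝ)) * (1 - α * μ) * α) * (n * r - s) :=
      mul_nonneg (mul_nonneg (by linarith) hα.le) (by linarith)
    have q2 : 0 ≤ ((α * μ - 1) * r + α * n + (α * L - 1) * r) *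
        ((α * L - 1) * r - ((α * μ - 1) * r + α * n)) := by
      have hAn : 0 ≤ (α * μ - 1) * r := mul_nonneg (by linarith) hr0
      have hLn : (α * μ - 1) * r ≤ (α * L - 1) * r := by
        apply mul_le_mul_of_nonneg_right _ hr0
        linarith [mul_le_mul_of_nonneg_left hLt.le hα.le]
      have h2nd : (α * L - 1) * r - ((α * μ - 1) * r + α * n) = α * ((L - μ) * r - n) := by
        ring
      refine mul_nonneg (by linarith [mul_nonneg hα.le hn0]) ?_
      rw [h2nd]
      exact mul_nonneg hα.le (by linarith)
    linarith [mul_nonneg (sub_nonneg.2 hb2) (sq_nonneg r), q1, q2]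

local notation "⟪" x ", " y "⟫" => @inner ℝ _ _ x y

theorem grad_step_contraction {d : ℕ}
    (f : EuclideanSpace ℝ (Fin d) → ℝ)
    (g : EuclideanSpace ℝ (Fin d) → EuclideanSpace ℝ (Fin d))
    (μ L α : ℝ) (hμ : 0 < μ) (hμL : μ ≤ L) (hα : 0 < α)
    (hgrad : ∀ x, HasGradientAt f (g x) x)
    (hsc : ConvexOn ℝ Set.univ (fun x => f x - μ / 2 * ‖x‖ ^ 2))
    (hlip : ∀ x y, ‖g x - g y‖ ≤ L * ‖x - y‖) :
    ∀ x y, ‖(x - α • g x) - (y - α • g y)‖ ≤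
      max |1 - α * μ| |1 - α * L| * ‖x - y‖ := by
  intro x y
  set h : EuclideanSpace ℝ (Fin d) → ℝ := fun z => f z - μ / 2 * ‖z‖ ^ 2 with hhdef
  set G : EuclideanSpace ℝ (Fin d) → EuclideanSpace ℝ (Fin d) := fun z => g z - μ • z with hGdef
  have hG : ∀ z, HasGradientAt h (G z) z := by
    intro z
    have h1 := (hgrad z).hasFDerivAt.sub
      (hasGradientAt_const_norm_sq_aux μ z).hasFDerivAt
    rw [← map_sub] at h1
    have h2 := by simpa using h1.hasGradientAt
    exact h2
  have hconv : ConvexOn ℝ Set.univ h := hsc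
  have hdesc : ∀ a b, h b ≤ h a + ⟪G a, b - a⟫ + (L - μ) / 2 * ‖b - a‖ ^ 2 := by
    intro a b
    have h1 := descent_aux hgrad hlip a b
    have h2 : ‖b‖ ^ 2 = ‖a‖ ^ 2 + 2 * ⟪a, b - a⟫ + ‖b - a‖ ^ 2 := by
      have hb : b = a + (b - a) := by abel
      calc ‖b‖ ^ 2 = ‖a + (b - a)‖ ^ 2 := by rw [← hb]
        _ = ‖a‖ ^ 2 + 2 * ⟪a, b - a⟫ + ‖b - a‖ ^ 2 := norm_add_sq_real a (b - a)
    have h3 : ⟪G a, b - a⟫ = ⟪g a, b - a⟫ - μ * ⟪a, b - a⟫ := by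
      rw [hGdef]
      rw [inner_sub_left, real_inner_smul_left]
    simp only [hhdef]
    rw [h3]
    nlinarith [h1, h2]
  set v := x - y with hvdef
  set u := G x - G y with hudef
  have hs_cs : ⟪u, v⟫ ≤ ‖u‖ * ‖v‖ := real_inner_le_norm u v
  have hX : (x - α • g x) - (y - α • g y) = (1 - α * μ) • v - α • u := by
    rw [hudef, hvdef, hGdef]
    module
  have hM1 : |1 - α * μ| ≤ max |1 - α * μ| |1 - α * L| := le_max_left _ _
  have hM2 : |1 - α * L| ≤ max |1 - α * μ| |1 - α * L| := le_max_right _ _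
  have hM0 : 0 ≤ max |1 - α * μ| |1 - α * L| := le_trans (abs_nonneg _) hM1
  rcases eq_or_lt_of_le hμL with hEq | hLt
  · -- μ = L : the gradient of h is constant, so u = 0
    have hz : (L - μ) / 2 = 0 := by rw [hEq]; ring
    have hC0 : ∀ a b, h b = h a + ⟪G a, b - a⟫ := by
      intro a b
      have d1 := hdesc a b
      have d2 := first_order_aux hconv hG a b
      rw [hz, zero_mul] at d1
      linarith
    have hu0 : u = 0 := by
      have e1 : h (x + u) = h x + ⟪G x, u⟫ := by simpa using hC0 x (x + u)
      have e2 : h (x + u) = h y + ⟪G y, x + u - y⟫ := hC0 y (x + u)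
      have e3 : h x = h y + ⟪G y, x - y⟫ := hC0 y x
      have h4 : ⟪G y, x + u - y⟫ = ⟪G y, x - y⟫ + ⟪G y, u⟫ := by
        rw [← inner_add_right]; congr 1; abel
      have h5 : ⟪G x, u⟫ = ⟪G y, u⟫ := by linarith
      have h6 : ⟪u, u⟫ = 0 := by
        rw [hudef, inner_sub_left, ← hudef]
        linarith
      exact inner_self_eq_zero.mp h6
    rw [hX, hu0, smul_zero, sub_zero, norm_smul, Real.norm_eq_abs]
    exact mul_le_mul_of_nonneg_right hM1 (norm_nonneg v)
  · -- μ < L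
    have hcoco : ‖u‖ ^ 2 ≤ (L - μ) * ⟪u, v⟫ :=
      cocoercive_aux (sub_pos.2 hLt) hconv hG hdesc x y
    have hsq : ‖(1 - α * μ) • v - α • u‖ ^ 2
        = (1 - α * μ) ^ 2 * ‖v‖ ^ 2 - 2 * ((1 - α * μ) * (α * ⟪u, v⟫)) + α ^ 2 * ‖u‖ ^ 2 := by
      rw [norm_sub_sq_real, real_inner_smul_left, real_inner_smul_right, norm_smul, norm_smul,
        real_inner_comm v u, Real.norm_eq_abs, Real.norm_eq_abs, mul_pow, mul_pow,
        sq_abs, sq_abs]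
    have halg := contraction_alg (μ := μ) (L := L) hα hLt (norm_nonneg v) (norm_nonneg u)
      hs_cs hcoco hM1 hM2
    have hsqle : ‖(1 - α * μ) • v - α • u‖ ^ 2
        ≤ (max |1 - α * μ| |1 - α * L|) ^ 2 * ‖v‖ ^ 2 := by
      rw [hsq]; exact halg
    rw [hX]
    nlinarith [hsqle, norm_nonneg ((1 - α * μ) • v - α • u), mul_nonneg hM0 (norm_nonneg v)]
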